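/- arXiv:1605.00131 — 2 statements merged into one kernel-verified Lean document; each statement's English description precedes it below -/
import Mathlib

section
/- As ε → 0⁺, the quantity ∫₀¹ f(s)^{1−2ε} ds is asymptotically equivalent to 1/(4ε); that is, the limit as ε → 0⁺ of (4ε) · ∫₀¹ f(s)^{1−2ε} ds equals 1. -/
open Filter

/-- `f(t) = 1/(2t)` for `0 < t ≤ 1/2` and `f(t) = 2(1-t)` for `1/2 < t ≤ 1`. -/
noncomputable def f (t : ℝ) : ℝ := if t ≤ 1 / 2 then 1 / (2 * t) else 2 * (1 - t)

lemma eq_on_left {ε : ℝ} (hε : 0 < ε) (hε' : ε < 1 / 2) :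
    Set.EqOn (fun s => f s ^ (1 - 2 * ε))
      (fun s => 2 ^ (2 * ε - 1) * s ^ (2 * ε - 1)) (Set.uIcc 0 (1 / 2)) := by
  rw [Set.uIcc_of_le (by norm_num)]
  intro s hs
  obtain ⟨hs0, hs1⟩ := hs
  simp only [f, if_pos hs1]
  rcases eq_or_lt_of_le hs0 with h | h
  · subst h
    rw [mul_zero, div_zero, Real.zero_rpow (by linarith), Real.zero_rpow (by linarith), mul_zero]
  · have h2s : (0 : ℝ) < 2 * s := by linarith
    rw [one_div, Real.inv_rpow h2s.le, ← Real.rpow_neg h2s.le]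
    have he : -(1 - 2 * ε) = 2 * ε - 1 := by ring
    rw [he, Real.mul_rpow (by norm_num) h.le]

lemma eq_on_right {ε : ℝ} (hε : 0 < ε) (hε' : ε < 1 / 2) :
    Set.EqOn (fun s => f s ^ (1 - 2 * ε))
      (fun s => (2 - 2 * s) ^ (1 - 2 * ε)) (Set.uIcc (1 / 2) 1) := by
  rw [Set.uIcc_of_le (by norm_num)]
  intro s hs
  obtain ⟨hs0, hs1⟩ := hs
  simp only [f]
  by_cases h : s ≤ 1 / 2
  · have hs : s = 1 / 2 := le_antisymm h hs0
    subst hs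
    norm_num
  · rw [if_neg h]
    congr 1
    ring

lemma integral_left {ε : ℝ} (hε : 0 < ε) (hε' : ε < 1 / 2) :
    (∫ s in (0 : ℝ)..(1 / 2), f s ^ (1 - 2 * ε)) = 1 / (4 * ε) := by
  rw [intervalIntegral.integral_congr (eq_on_left hε hε')]
  rw [intervalIntegral.integral_const_mul,
    integral_rpow (Or.inl (by linarith : (-1 : ℝ) < 2 * ε - 1))]
  have h1 : 2 * ε - 1 + 1 = 2 * ε := by ring
  rw [h1, Real.zero_rpow (by linarith)]
  have h2 : ((1 : ℝ) / 2) ^ (2 * ε) = 2 ^ (-(2 * ε)) := by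
    rw [Real.rpow_neg (by norm_num), one_div, Real.inv_rpow (by norm_num)]
  rw [h2, sub_zero]
  have h3 : (2 : ℝ) ^ (2 * ε - 1) * 2 ^ (-(2 * ε)) = 2 ^ (-(1 : ℝ)) := by
    rw [← Real.rpow_add (by norm_num)]
    congr 1
    ring
  rw [mul_div_assoc', h3, Real.rpow_neg_one]
  norm_num
  ring

lemma integral_right {ε : ℝ} (hε : 0 < ε) (hε' : ε < 1 / 2) :
    (∫ s in (1 / 2 : ℝ)..1, f s ^ (1 - 2 * ε)) = 1 / (4 - 4 * ε) := by
  rw [intervalIntegral.integral_congr (eq_on_right hε hε')]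
  rw [intervalIntegral.integral_comp_sub_mul (fun u => u ^ (1 - 2 * ε)) two_ne_zero 2]
  norm_num
  rw [integral_rpow (Or.inl (by linarith : (-1 : ℝ) < 1 - 2 * ε))]
  rw [Real.one_rpow, Real.zero_rpow (by linarith), sub_zero]
  have h2 : (1 : ℝ) - 2 * ε + 1 ≠ 0 := by linarith
  have h3 : (4 : ℝ) - 4 * ε ≠ 0 := by linarith
  have h4 : (1 : ℝ) - ε ≠ 0 := by linarith
  field_simp
  ring

lemma intable_left {ε : ℝ} (hε : 0 < ε) (hε' : ε < 1 / 2) :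
    IntervalIntegrable (fun s => f s ^ (1 - 2 * ε)) MeasureTheory.volume 0 (1 / 2) := by
  apply IntervalIntegrable.congr_ae
    ((intervalIntegral.intervalIntegrable_rpow' (by linarith : (-1 : ℝ) < 2 * ε - 1)).const_mul
      (2 ^ (2 * ε - 1)))
  exact ((MeasureTheory.ae_restrict_mem measurableSet_uIoc).mono fun s hs =>
    ((eq_on_left hε hε') (Set.uIoc_subset_uIcc hs)).symm)

lemma intable_right {ε : ℝ} (hε : 0 < ε) (hε' : ε < 1 / 2) :
    IntervalIntegrable (fun s => f s ^ (1 - 2 * ε)) MeasureTheory.volume (1 / 2) 1 := by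
  have hc : Continuous fun s : ℝ => (2 - 2 * s) ^ (1 - 2 * ε) := by
    apply Continuous.rpow_const (by continuity)
    intro x
    right
    linarith
  apply IntervalIntegrable.congr_ae (hc.intervalIntegrable _ _)
  exact ((MeasureTheory.ae_restrict_mem measurableSet_uIoc).mono fun s hs =>
    ((eq_on_right hε hε') (Set.uIoc_subset_uIcc hs)).symm)

lemma integral_total {ε : ℝ} (hε : 0 < ε) (hε' : ε < 1 / 2) :
    (∫ s in Set.Ioc (0 : ℝ) 1, f s ^ (1 - 2 * ε)) = 1 / (4 * ε) + 1 / (4 - 4 * ε) := by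
  rw [← intervalIntegral.integral_of_le (by norm_num : (0 : ℝ) ≤ 1)]
  rw [← intervalIntegral.integral_add_adjacent_intervals (intable_left hε hε')
    (intable_right hε hε')]
  rw [integral_left hε hε', integral_right hε hε']

/-- As `ε → 0⁺`, `∫₀¹ f(s)^{1-2ε} ds ∼ 1/(4ε)`: the limit as `ε → 0⁺` of
`(4ε) · ∫₀¹ f(s)^{1-2ε} ds` equals `1`. -/
theorem stmt_4 :
    Tendsto (fun ε : ℝ => 4 * ε * ∫ s in Set.Ioc (0 : ℝ) 1, f s ^ (1 - 2 * ε))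
      (nhdsWithin 0 (Set.Ioi 0)) (nhds 1) := by
  have key : Tendsto (fun ε : ℝ => 1 + ε / (1 - ε)) (nhdsWithin 0 (Set.Ioi 0)) (nhds 1) := by
    have hc : ContinuousAt (fun ε : ℝ => 1 + ε / (1 - ε)) 0 := by
      apply ContinuousAt.add continuousAt_const
      exact ContinuousAt.div continuousAt_id (by fun_prop) (by norm_num)
    have := Tendsto.mono_left hc.tendsto (nhdsWithin_le_nhds (s := Set.Ioi 0))
    simpa using this
  apply key.congr'
  filter_upwards [Ioo_mem_nhdsGT_of_mem (by norm_num : (0 : ℝ) ∈ Set.Ico 0 (1 / 2))]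
    with ε hε
  obtain ⟨h0, h1⟩ := hε
  rw [integral_total h0 h1]
  have h2 : (4 : ℝ) * ε ≠ 0 := by linarith
  have h3 : (4 : ℝ) - 4 * ε ≠ 0 := by linarith
  have h4 : (1 : ℝ) - ε ≠ 0 := by linarith
  field_simp
end

section
/- For every ε with 0 < ε < 1/2, the kernel k_ε is square-integrable on the unit square [0,1]², and its L² norm satisfies (∫₀¹∫₀¹ k_ε(s,t)² ds dt)^{1/2} ≤ ∫₀¹ f(s)^{1−2ε} ds. Consequently the integral operator K_ε on L²([0,1]) with kernel k_ε is a Hilbert–Schmidt (in particular, bounded) operator. -/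
open MeasureTheory

/-- For `ε > 0`, the kernel `k_ε(s,t) = f(s)^{-1/2-ε} ⌊f(s)f(t)⌋ f(t)^{-1/2-ε}`. -/
noncomputable def kε (ε : ℝ) (s t : ℝ) : ℝ :=
  f s ^ (-(1 / 2 : ℝ) - ε) * (⌊f s * f t⌋ : ℝ) * f t ^ (-(1 / 2 : ℝ) - ε)

lemma f_nonneg {s : ℝ} (hs : s ∈ Set.Icc (0:ℝ) 1) : 0 ≤ f s := by
  obtain ⟨h0, h1⟩ := hs
  unfold f
  split_ifs with h
  · exact div_nonneg one_pos.le (by linarith)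
  · linarith

lemma measurable_f : Measurable f := by
  unfold f
  exact Measurable.ite (measurableSet_Iic (a := (1:ℝ)/2)) (by fun_prop) (by fun_prop)

lemma measurable_kε (ε : ℝ) : Measurable (fun p : ℝ × ℝ => kε ε p.1 p.2) := by
  unfold kε
  have h1 : Measurable fun p : ℝ×ℝ => f p.1 := measurable_f.comp measurable_fst
  have h2 : Measurable fun p : ℝ×ℝ => f p.2 := measurable_f.comp measurable_snd
  have h3 : Measurable fun p : ℝ×ℝ => ((⌊f p.1 * f p.2⌋ : ℤ) : ℝ) :=
    measurable_from_top.comp ((h1.mul h2).floor)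
  fun_prop

lemma phi_sq {ε : ℝ} {s : ℝ} (hs : s ∈ Set.Icc (0:ℝ) 1) :
    (f s ^ ((1:ℝ)/2 - ε)) ^ 2 = f s ^ (1 - 2*ε) := by
  have h := f_nonneg hs
  rw [← Real.rpow_natCast (f s ^ ((1:ℝ)/2 - ε)) 2, ← Real.rpow_mul h]
  norm_num
  ring_nf

lemma kε_nonneg (ε : ℝ) {s t : ℝ} (hs : s ∈ Set.Icc (0:ℝ) 1) (ht : t ∈ Set.Icc (0:ℝ) 1) :
    0 ≤ kε ε s t := by
  have h1 := f_nonneg hs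
  have h2 := f_nonneg ht
  have : (0:ℝ) ≤ (⌊f s * f t⌋ : ℝ) := by
    exact_mod_cast Int.le_floor.2 (by simpa using mul_nonneg h1 h2)
  exact mul_nonneg (mul_nonneg (Real.rpow_nonneg h1 _) this) (Real.rpow_nonneg h2 _)

lemma kε_le {ε : ℝ} (hε0 : 0 < ε) {s t : ℝ} (hs : s ∈ Set.Icc (0:ℝ) 1)
    (ht : t ∈ Set.Icc (0:ℝ) 1) :
    kε ε s t ≤ f s ^ ((1:ℝ)/2 - ε) * f t ^ ((1:ℝ)/2 - ε) := by
  have h1 := f_nonneg hs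
  have h2 := f_nonneg ht
  have hane : -(1/2 : ℝ) - ε ≠ 0 := by linarith
  rcases eq_or_lt_of_le h1 with h1' | h1'
  · rw [kε, ← h1', Real.zero_rpow hane]
    simp only [zero_mul, mul_zero]
    exact mul_nonneg (Real.rpow_nonneg le_rfl _) (Real.rpow_nonneg h2 _)
  rcases eq_or_lt_of_le h2 with h2' | h2'
  · rw [kε, ← h2', Real.zero_rpow hane]
    simp only [zero_mul, mul_zero]
    exact mul_nonneg (Real.rpow_nonneg h1 _) (Real.rpow_nonneg le_rfl _)
  have hA : (0:ℝ) < f s ^ (-(1/2 : ℝ) - ε) := Real.rpow_pos_of_pos h1' _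
  have hB : (0:ℝ) < f t ^ (-(1/2 : ℝ) - ε) := Real.rpow_pos_of_pos h2' _
  have hfloor : (⌊f s * f t⌋ : ℝ) ≤ f s * f t := Int.floor_le _
  have key : kε ε s t ≤ f s ^ (-(1/2 : ℝ) - ε) * (f s * f t) * f t ^ (-(1/2 : ℝ) - ε) := by
    unfold kε
    have := mul_le_mul_of_nonneg_left hfloor hA.le
    exact mul_le_mul_of_nonneg_right this hB.le
  refine key.trans_eq ?_
  have e1 : f s ^ (-(1/2 : ℝ) - ε) * f s = f s ^ ((1:ℝ)/2 - ε) := by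
    rw [← Real.rpow_add_one h1'.ne']
    congr 1; ring
  have e2 : f t ^ (-(1/2 : ℝ) - ε) * f t = f t ^ ((1:ℝ)/2 - ε) := by
    rw [← Real.rpow_add_one h2'.ne']
    congr 1; ring
  calc f s ^ (-(1/2 : ℝ) - ε) * (f s * f t) * f t ^ (-(1/2 : ℝ) - ε)
      = (f s ^ (-(1/2 : ℝ) - ε) * f s) * (f t ^ (-(1/2 : ℝ) - ε) * f t) := by ring
    _ = _ := by rw [e1, e2]

lemma F_int {ε : ℝ} (hε : ε ∈ Set.Ioo (0:ℝ) (1/2)) :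
    IntegrableOn (fun s => f s ^ (1 - 2*ε)) (Set.Icc (0:ℝ) 1) := by
  obtain ⟨hε0, hε2⟩ := hε
  have hmeas : Measurable fun s : ℝ => f s ^ (1-2*ε) := by
    have := measurable_f
    fun_prop
  rw [integrableOn_Icc_iff_integrableOn_Ioc]
  have hsplit : Set.Ioc (0:ℝ) 1 = Set.Ioc 0 (1/2) ∪ Set.Ioc (1/2) 1 :=
    (Set.Ioc_union_Ioc_eq_Ioc (by norm_num) (by norm_num)).symm
  rw [hsplit]
  apply IntegrableOn.union
  · have hint : IntegrableOn (fun s : ℝ => 2 ^ (2*ε-1) * s ^ (2*ε-1)) (Set.Ioc 0 (1/2)) :=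
      ((intervalIntegral.intervalIntegrable_rpow' (by linarith)).1).const_mul _
    apply hint.congr_fun ?_ measurableSet_Ioc
    intro x hx
    obtain ⟨hx0, hx2⟩ := hx
    have hfx : f x = (2*x)⁻¹ := by rw [f, if_pos hx2, one_div]
    have h2x : (0:ℝ) < 2*x := by linarith
    simp only
    rw [hfx, Real.inv_rpow h2x.le, ← Real.rpow_neg h2x.le,
      Real.mul_rpow (by norm_num : (0:ℝ) ≤ 2) hx0.le]
    congr 1 <;> congr 1 <;> ring
  · apply Measure.integrableOn_of_bounded (M := 1) (by simp) hmeas.aestronglyMeasurable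
    filter_upwards [ae_restrict_mem measurableSet_Ioc] with x hx
    obtain ⟨hx1, hx2⟩ := hx
    have hfx : f x = 2*(1-x) := by rw [f, if_neg (by linarith)]
    rw [Real.norm_eq_abs, abs_of_nonneg (Real.rpow_nonneg (by rw [hfx]; linarith) _)]
    exact Real.rpow_le_one (by rw [hfx]; linarith) (by rw [hfx]; linarith) (by linarith)

lemma measurable_F (ε : ℝ) : Measurable fun s : ℝ => f s ^ (1 - 2*ε) := by
  have := measurable_f
  fun_prop

lemma memφ {ε : ℝ} (hε : ε ∈ Set.Ioo (0:ℝ) (1/2)) :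
    MemLp (fun s => f s ^ ((1:ℝ)/2 - ε)) 2 (volume.restrict (Set.Icc (0:ℝ) 1)) := by
  have hm : Measurable fun s : ℝ => f s ^ ((1:ℝ)/2 - ε) := by
    have := measurable_f; fun_prop
  rw [memLp_two_iff_integrable_sq hm.aestronglyMeasurable]
  apply (F_int hε).congr
  filter_upwards [ae_restrict_mem measurableSet_Icc] with s hs
  exact (phi_sq hs).symm

/-- For `0 < ε < 1/2`, the kernel `k_ε` is square-integrable on `[0,1]²`, its
`L²` norm satisfies `(∫₀¹∫₀¹ k_ε(s,t)² ds dt)^{1/2} ≤ ∫₀¹ f(s)^{1-2ε} ds`, and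
consequently the integral operator `K_ε` on `L²([0,1])` with kernel `k_ε` is a
Hilbert–Schmidt (in particular, bounded, i.e. continuous linear) operator. -/
theorem stmt_5 (ε : ℝ) (hε : ε ∈ Set.Ioo (0 : ℝ) (1 / 2)) :
    IntegrableOn (fun p : ℝ × ℝ => kε ε p.1 p.2 ^ 2)
        (Set.Icc (0 : ℝ) 1 ×ˢ Set.Icc (0 : ℝ) 1) ∧
      Real.sqrt (∫ p in Set.Icc (0 : ℝ) 1 ×ˢ Set.Icc (0 : ℝ) 1, kε ε p.1 p.2 ^ 2) ≤
        ∫ s in Set.Icc (0 : ℝ) 1, f s ^ (1 - 2 * ε) ∧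
      ∃ K : Lp ℝ 2 (volume.restrict (Set.Icc (0 : ℝ) 1)) →L[ℝ]
            Lp ℝ 2 (volume.restrict (Set.Icc (0 : ℝ) 1)),
        ∀ g : Lp ℝ 2 (volume.restrict (Set.Icc (0 : ℝ) 1)),
          ∀ᵐ s ∂(volume.restrict (Set.Icc (0 : ℝ) 1)),
            (K g : ℝ → ℝ) s = ∫ t in Set.Icc (0 : ℝ) 1, kε ε s t * (g : ℝ → ℝ) t := by
  obtain ⟨hε0, hε2⟩ := hε
  set μ : Measure ℝ := volume.restrict (Set.Icc (0:ℝ) 1) with hμdef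
  set I : Set ℝ := Set.Icc (0:ℝ) 1 with hIdef
  have hprod : (volume : Measure (ℝ×ℝ)).restrict (I ×ˢ I) = μ.prod μ := by
    rw [hμdef, Measure.prod_restrict, ← Measure.volume_eq_prod]
  have hFint : Integrable (fun s => f s ^ (1 - 2*ε)) μ := F_int ⟨hε0, hε2⟩
  have hFmul : Integrable (fun p : ℝ×ℝ => f p.1 ^ (1-2*ε) * f p.2 ^ (1-2*ε)) (μ.prod μ) :=
    hFint.mul_prod hFint
  have hksq_meas : AEStronglyMeasurable (fun p : ℝ×ℝ => kε ε p.1 p.2 ^ 2)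
      ((volume : Measure (ℝ×ℝ)).restrict (I ×ˢ I)) :=
    ((measurable_kε ε).pow_const 2).aestronglyMeasurable
  have hbd : ∀ᵐ p ∂((volume : Measure (ℝ×ℝ)).restrict (I ×ˢ I)),
      ‖kε ε p.1 p.2 ^ 2‖ ≤ f p.1 ^ (1-2*ε) * f p.2 ^ (1-2*ε) := by
    filter_upwards [ae_restrict_mem (measurableSet_Icc.prod measurableSet_Icc)] with p hp
    obtain ⟨hp1, hp2⟩ := hp
    have h1 := kε_nonneg ε hp1 hp2
    have h2 := kε_le hε0 hp1 hp2
    rw [Real.norm_eq_abs, abs_of_nonneg (by positivity)]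
    calc kε ε p.1 p.2 ^ 2
        ≤ (f p.1 ^ ((1:ℝ)/2 - ε) * f p.2 ^ ((1:ℝ)/2 - ε)) ^ 2 := by
          apply pow_le_pow_left₀ h1 h2
      _ = f p.1 ^ (1-2*ε) * f p.2 ^ (1-2*ε) := by
          rw [mul_pow, phi_sq hp1, phi_sq hp2]
  have part1 : IntegrableOn (fun p : ℝ × ℝ => kε ε p.1 p.2 ^ 2) (I ×ˢ I) := by
    refine Integrable.mono' ?_ hksq_meas hbd
    rw [hprod]; exact hFmul
  refine ⟨part1, ?_, ?_⟩
  · -- L² norm bound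
    have hF0 : 0 ≤ ∫ s, f s ^ (1-2*ε) ∂μ := by
      apply integral_nonneg_of_ae
      filter_upwards [ae_restrict_mem measurableSet_Icc] with s hs
      exact Real.rpow_nonneg (f_nonneg hs) _
    have hle : (∫ p in I ×ˢ I, kε ε p.1 p.2 ^ 2) ≤ (∫ s, f s ^ (1-2*ε) ∂μ) ^ 2 := by
      have h1 : (∫ p in I ×ˢ I, kε ε p.1 p.2 ^ 2)
          ≤ ∫ p, f p.1 ^ (1-2*ε) * f p.2 ^ (1-2*ε) ∂(μ.prod μ) := by
        rw [← hprod] at hFmul ⊢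
        refine integral_mono_ae part1 hFmul ?_
        filter_upwards [hbd] with p hp
        exact le_trans (le_abs_self _) hp
      have h2 : ∫ p, f p.1 ^ (1-2*ε) * f p.2 ^ (1-2*ε) ∂(μ.prod μ)
          = (∫ s, f s ^ (1-2*ε) ∂μ) ^ 2 := by
        rw [integral_prod_mul (μ := μ) (ν := μ) (f := fun s => f s ^ (1-2*ε))
          (g := fun s => f s ^ (1-2*ε)), sq]
      linarith
    calc Real.sqrt (∫ p in I ×ˢ I, kε ε p.1 p.2 ^ 2)
        ≤ Real.sqrt ((∫ s, f s ^ (1-2*ε) ∂μ) ^ 2) := Real.sqrt_le_sqrt hle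
      _ = ∫ s, f s ^ (1-2*ε) ∂μ := Real.sqrt_sq hF0
  · -- the Hilbert–Schmidt operator
    set φ : ℝ → ℝ := fun s => f s ^ ((1:ℝ)/2 - ε) with hφdef
    have hφmem : MemLp φ 2 μ := memφ ⟨hε0, hε2⟩
    have hφ0 : ∀ᵐ s ∂μ, 0 ≤ φ s := by
      filter_upwards [ae_restrict_mem measurableSet_Icc] with s hs
      exact Real.rpow_nonneg (f_nonneg hs) _
    set T : Lp ℝ 2 μ → ℝ → ℝ := fun g s => ∫ t, kε ε s t * (g : ℝ → ℝ) t ∂μ with hTdef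
    have hφg : ∀ g : Lp ℝ 2 μ, Integrable (fun t => φ t * ‖(g : ℝ → ℝ) t‖) μ := by
      intro g
      have hgn : MemLp (fun t => ‖(g : ℝ → ℝ) t‖) 2 μ := (Lp.memLp g).norm
      have h := L2.integrable_inner (𝕜 := ℝ) (hφmem.toLp φ) (hgn.toLp _)
      refine h.congr ?_
      filter_upwards [hφmem.coeFn_toLp, hgn.coeFn_toLp] with t h1 h2
      rw [RCLike.inner_apply, h1, h2, starRingEnd_apply, star_trivial, mul_comm]
    have hMg0 : ∀ g : Lp ℝ 2 μ, 0 ≤ ∫ t, φ t * ‖(g : ℝ → ℝ) t‖ ∂μ := by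
      intro g
      refine integral_nonneg_of_ae ?_
      filter_upwards [hφ0] with t ht
      positivity
    have hkey : ∀ g : Lp ℝ 2 μ, ∀ s ∈ I, ∀ᵐ t ∂μ,
        ‖kε ε s t * (g : ℝ → ℝ) t‖ ≤ φ s * (φ t * ‖(g : ℝ → ℝ) t‖) := by
      intro g s hs
      filter_upwards [ae_restrict_mem measurableSet_Icc] with t ht
      rw [norm_mul, Real.norm_eq_abs (kε ε s t), abs_of_nonneg (kε_nonneg ε hs ht)]
      calc kε ε s t * ‖(g : ℝ → ℝ) t‖
          ≤ (φ s * φ t) * ‖(g : ℝ → ℝ) t‖ :=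
            mul_le_mul_of_nonneg_right (kε_le hε0 hs ht) (norm_nonneg _)
        _ = φ s * (φ t * ‖(g : ℝ → ℝ) t‖) := by ring
    have hker_int : ∀ g : Lp ℝ 2 μ, ∀ s ∈ I,
        Integrable (fun t => kε ε s t * (g : ℝ → ℝ) t) μ := by
      intro g s hs
      refine Integrable.mono' ((hφg g).const_mul (φ s))
        ((((measurable_kε ε).comp measurable_prodMk_left).aestronglyMeasurable).mul
          (Lp.aestronglyMeasurable g)) (hkey g s hs)
    have hTbound : ∀ g : Lp ℝ 2 μ, ∀ᵐ s ∂μ,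
        ‖T g s‖ ≤ ‖(∫ t, φ t * ‖(g : ℝ → ℝ) t‖ ∂μ) * φ s‖ := by
      intro g
      filter_upwards [ae_restrict_mem measurableSet_Icc] with s hs
      have h0 : 0 ≤ φ s := Real.rpow_nonneg (f_nonneg hs) _
      have hb1 : ‖T g s‖ ≤ ∫ t, ‖kε ε s t * (g : ℝ → ℝ) t‖ ∂μ :=
        norm_integral_le_integral_norm _
      have hb2 : (∫ t, ‖kε ε s t * (g : ℝ → ℝ) t‖ ∂μ)
          ≤ ∫ t, φ s * (φ t * ‖(g : ℝ → ℝ) t‖) ∂μ :=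
        integral_mono_ae (hker_int g s hs).norm ((hφg g).const_mul _) (hkey g s hs)
      rw [integral_const_mul] at hb2
      rw [Real.norm_eq_abs ((∫ t, φ t * ‖(g : ℝ → ℝ) t‖ ∂μ) * φ s),
        abs_of_nonneg (mul_nonneg (hMg0 g) h0)]
      calc ‖T g s‖ ≤ φ s * ∫ t, φ t * ‖(g : ℝ → ℝ) t‖ ∂μ := hb1.trans hb2
        _ = (∫ t, φ t * ‖(g : ℝ → ℝ) t‖ ∂μ) * φ s := by ring
    have hTmeas : ∀ g : Lp ℝ 2 μ, AEStronglyMeasurable (T g) μ := by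
      intro g
      have hj : AEStronglyMeasurable (fun p : ℝ × ℝ => kε ε p.1 p.2 * (g : ℝ → ℝ) p.2)
          (μ.prod μ) :=
        (measurable_kε ε).aestronglyMeasurable.mul (Lp.aestronglyMeasurable g).comp_snd
      exact hj.integral_prod_right'
    have hTmem : ∀ g : Lp ℝ 2 μ, MemLp (T g) 2 μ := fun g =>
      MemLp.of_le (hφmem.const_mul _) (hTmeas g) (hTbound g)
    have hCS : ∀ g : Lp ℝ 2 μ, (∫ t, φ t * ‖(g : ℝ → ℝ) t‖ ∂μ)
        ≤ (∫ s, φ s ^ (2:ℝ) ∂μ) ^ ((1:ℝ)/2) * ‖g‖ := by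
      intro g
      have hgn : MemLp (fun t => ‖(g : ℝ → ℝ) t‖) 2 μ := (Lp.memLp g).norm
      have h2 : ENNReal.ofReal (2:ℝ) = 2 := by norm_num
      have hconj : Real.HolderConjugate 2 2 := Real.HolderConjugate.two_two
      have h := integral_mul_le_Lp_mul_Lq_of_nonneg hconj hφ0
        (Filter.Eventually.of_forall fun t => norm_nonneg _)
        (by rw [h2]; exact hφmem) (by rw [h2]; exact hgn)
      have hg2 : (∫ t, ‖(g : ℝ → ℝ) t‖ ^ (2:ℝ) ∂μ) = ‖g‖ ^ 2 := by
        rw [← real_inner_self_eq_norm_sq g, L2.inner_def]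
        refine integral_congr_ae (Filter.Eventually.of_forall fun t => ?_)
        show ‖(g : ℝ → ℝ) t‖ ^ (2:ℝ) = (inner ℝ ((g : ℝ → ℝ) t) ((g : ℝ → ℝ) t) : ℝ)
        rw [show (2:ℝ) = ((2:ℕ):ℝ) by norm_num, Real.rpow_natCast, Real.norm_eq_abs,
          sq_abs, sq, RCLike.inner_apply, starRingEnd_apply, star_trivial]
      rw [hg2] at h
      rwa [show ((‖g‖:ℝ) ^ 2) ^ ((1:ℝ)/2) = ‖g‖ from by
        rw [← Real.rpow_natCast ‖g‖ 2, ← Real.rpow_mul (norm_nonneg _)]; norm_num] at h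
    set Cφ : ℝ := (∫ s, φ s ^ (2:ℝ) ∂μ) ^ ((1:ℝ)/2) with hCφdef
    set Dφ : ℝ := (eLpNorm φ 2 μ).toReal with hDφdef
    have hnorm : ∀ g : Lp ℝ 2 μ, ‖(hTmem g).toLp (T g)‖ ≤ Cφ * Dφ * ‖g‖ := by
      intro g
      set Mg : ℝ := ∫ t, φ t * ‖(g : ℝ → ℝ) t‖ ∂μ with hMgdef
      have h1 : eLpNorm (T g) 2 μ ≤ eLpNorm (fun s => Mg • φ s) 2 μ :=
        eLpNorm_mono_ae (by simpa [smul_eq_mul, hMgdef] using hTbound g)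
      have h2 : eLpNorm (fun s => Mg • φ s) 2 μ = ‖Mg‖₊ • eLpNorm φ 2 μ :=
        eLpNorm_const_smul Mg φ 2 μ
      have hne : (‖Mg‖₊ • eLpNorm φ 2 μ) ≠ ⊤ := by
        rw [ENNReal.smul_def, smul_eq_mul]
        exact ENNReal.mul_ne_top ENNReal.coe_ne_top hφmem.eLpNorm_ne_top
      rw [Lp.norm_toLp]
      calc (eLpNorm (T g) 2 μ).toReal ≤ (‖Mg‖₊ • eLpNorm φ 2 μ).toReal :=
            ENNReal.toReal_mono hne (h2 ▸ h1)
        _ = Mg * Dφ := by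
            rw [ENNReal.smul_def, smul_eq_mul, ENNReal.toReal_mul, ENNReal.coe_toReal,
              coe_nnnorm, Real.norm_eq_abs, abs_of_nonneg (hMg0 g), hDφdef]
        _ ≤ (Cφ * ‖g‖) * Dφ := mul_le_mul_of_nonneg_right (hCS g) ENNReal.toReal_nonneg
        _ = Cφ * Dφ * ‖g‖ := by ring
    have haddT : ∀ g h : Lp ℝ 2 μ, T (g + h) =ᵐ[μ] T g + T h := by
      intro g h
      filter_upwards [ae_restrict_mem measurableSet_Icc] with s hs
      have hc : (((g + h : Lp ℝ 2 μ) : ℝ → ℝ)) =ᵐ[μ] (g : ℝ → ℝ) + (h : ℝ → ℝ) :=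
        Lp.coeFn_add g h
      have e1 : T (g + h) s = ∫ t, (kε ε s t * (g : ℝ → ℝ) t + kε ε s t * (h : ℝ → ℝ) t) ∂μ := by
        refine integral_congr_ae ?_
        filter_upwards [hc] with t ht
        rw [ht]
        simp [mul_add]
      rw [Pi.add_apply, e1, integral_add (hker_int g s hs) (hker_int h s hs)]
    have hsmulT : ∀ (c : ℝ) (g : Lp ℝ 2 μ), T (c • g) =ᵐ[μ] c • T g := by
      intro c g
      filter_upwards [ae_restrict_mem measurableSet_Icc] with s hs
      have hc : (((c • g : Lp ℝ 2 μ) : ℝ → ℝ)) =ᵐ[μ] c • (g : ℝ → ℝ) := Lp.coeFn_smul c g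
      have e1 : T (c • g) s = ∫ t, c • (kε ε s t * (g : ℝ → ℝ) t) ∂μ := by
        refine integral_congr_ae ?_
        filter_upwards [hc] with t ht
        rw [ht]
        simp only [Pi.smul_apply, smul_eq_mul]
        ring
      rw [Pi.smul_apply, e1, integral_smul]
    set Tlin : Lp ℝ 2 μ →ₗ[ℝ] Lp ℝ 2 μ :=
      { toFun := fun g => (hTmem g).toLp (T g)
        map_add' := by
          intro g h
          rw [← MemLp.toLp_add (hTmem g) (hTmem h)]
          exact (MemLp.toLp_eq_toLp_iff _ _).2 (haddT g h)
        map_smul' := by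
          intro c g
          simp only [RingHom.id_apply]
          rw [← MemLp.toLp_const_smul c (hTmem g)]
          exact (MemLp.toLp_eq_toLp_iff _ _).2 (hsmulT c g) } with hTlindef
    refine ⟨Tlin.mkContinuous (Cφ * Dφ) hnorm, ?_⟩
    intro g
    filter_upwards [(hTmem g).coeFn_toLp] with s hs
    exact hs
end
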